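/- For any α > 0, β ∈ ℝ, and a > 0, the equation š_β(κ) − φ_a(κ) = 0 has exactly one solution κ_a in the interval (α/2, ∞), where š_β(κ) = β + (1/(2π))(log(κ/2) + γ) and φ_a(κ) = (α/(4π)) ∫_{ℝ} e^{−2a√(p²+κ²)} / ((2√(p²+κ²) − α)·√(p²+κ²)) dp. -/

import Mathlib

open Real MeasureTheory Set Filter Topology

noncomputable def sBeta (β κ : ℝ) : ℝ :=
  β + (1 / (2 * π)) * (Real.log (κ / 2) + Real.eulerMascheroniConstant)

noncomputable def phiA (α a κ : ℝ) : ℝ :=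
  (α / (4 * π)) * ∫ p : ℝ,
    Real.exp (-2 * a * Real.sqrt (p ^ 2 + κ ^ 2)) /
      ((2 * Real.sqrt (p ^ 2 + κ ^ 2) - α) * Real.sqrt (p ^ 2 + κ ^ 2))

noncomputable def phi0 (α κ : ℝ) : ℝ :=
  (α / (4 * π)) * ∫ p : ℝ,
    1 / ((2 * Real.sqrt (p ^ 2 + κ ^ 2) - α) * Real.sqrt (p ^ 2 + κ ^ 2))

noncomputable def besselK0 (x : ℝ) : ℝ := ∫ t in Set.Ioi (0:ℝ), Real.exp (-x * Real.cosh t)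

noncomputable def psiA (α a κ : ℝ) : ℝ :=
  (α / π) * ∫ p in Set.Ioi (0:ℝ),
    p * Real.exp (-2 * a * Real.sqrt (p ^ 2 + κ ^ 2)) /
      ((2 * Real.sqrt (p ^ 2 + κ ^ 2) - α) * Real.sqrt (p ^ 2 + κ ^ 2))

noncomputable def psiC (α a κ : ℝ) : ℝ :=
  (α / π) * ∫ t in Set.Ioi κ, Real.exp (-2 * t * a) / (2 * t - α)

/-! ### Auxiliary definitions and lemmas -/

/-- The integrand of `phiA`. -/
noncomputable def itg (α a κ p : ℝ) : ℝ :=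
  Real.exp (-2 * a * Real.sqrt (p ^ 2 + κ ^ 2)) /
    ((2 * Real.sqrt (p ^ 2 + κ ^ 2) - α) * Real.sqrt (p ^ 2 + κ ^ 2))

lemma phiA_eq (α a κ : ℝ) : phiA α a κ = (α / (4 * π)) * ∫ p : ℝ, itg α a κ p := rfl

lemma le_sqrt_self_sq (κ p : ℝ) (hκ : 0 ≤ κ) : κ ≤ Real.sqrt (p ^ 2 + κ ^ 2) := by
  rw [Real.le_sqrt hκ (by positivity)]
  nlinarith [sq_nonneg p]

lemma abs_le_sqrt_sq (κ p : ℝ) : |p| ≤ Real.sqrt (p ^ 2 + κ ^ 2) := by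
  rw [← Real.sqrt_sq_eq_abs]
  exact Real.sqrt_le_sqrt (by nlinarith [sq_nonneg κ])

lemma denom_pos {α κ : ℝ} (hα : 0 < α) (hκ : α / 2 < κ) (p : ℝ) :
    0 < (2 * Real.sqrt (p ^ 2 + κ ^ 2) - α) * Real.sqrt (p ^ 2 + κ ^ 2) := by
  have hκ0 : 0 < κ := lt_of_le_of_lt (by positivity) hκ
  have h := le_sqrt_self_sq κ p hκ0.le
  have : 0 < 2 * Real.sqrt (p ^ 2 + κ ^ 2) - α := by nlinarith
  nlinarith

lemma itg_nonneg {α a κ : ℝ} (hα : 0 < α) (hκ : α / 2 < κ) (p : ℝ) :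
    0 ≤ itg α a κ p :=
  div_nonneg (Real.exp_pos _).le (denom_pos hα hκ p).le

/-- Monotonicity of the profile function `s ↦ e^{-2as}/((2s-α)s)`. -/
lemma profile_anti {α a s t : ℝ} (hα : 0 < α) (ha : 0 < a) (hs : α / 2 < s) (hst : s ≤ t) :
    Real.exp (-2 * a * t) / ((2 * t - α) * t) ≤ Real.exp (-2 * a * s) / ((2 * s - α) * s) := by
  have hs0 : 0 < s := lt_of_le_of_lt (by positivity) hs
  have ht : α / 2 < t := lt_of_lt_of_le hs hst
  have ht0 : 0 < t := lt_of_le_of_lt (by positivity) ht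
  have hds : 0 < (2 * s - α) * s := by nlinarith
  have hdt : 0 < (2 * t - α) * t := by nlinarith
  refine div_le_div₀ (Real.exp_pos _).le (Real.exp_le_exp.mpr (by nlinarith)) hds (by nlinarith)

/-- Pointwise antitonicity of the integrand in `κ`. -/
lemma itg_anti {α a κ₁ κ₂ : ℝ} (hα : 0 < α) (ha : 0 < a) (h1 : α / 2 < κ₁) (h12 : κ₁ ≤ κ₂)
    (p : ℝ) : itg α a κ₂ p ≤ itg α a κ₁ p := by
  have hκ0 : 0 < κ₁ := lt_of_le_of_lt (by positivity) h1
  have hF1 : α / 2 < Real.sqrt (p ^ 2 + κ₁ ^ 2) :=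
    lt_of_lt_of_le h1 (le_sqrt_self_sq κ₁ p hκ0.le)
  have hF12 : Real.sqrt (p ^ 2 + κ₁ ^ 2) ≤ Real.sqrt (p ^ 2 + κ₂ ^ 2) :=
    Real.sqrt_le_sqrt (by nlinarith)
  exact profile_anti hα ha hF1 hF12

/-- Upper bound for the integrand. -/
lemma itg_le {α a κ c : ℝ} (hα : 0 < α) (ha : 0 < a) (hc : α / 2 < c) (hcκ : c ≤ κ) (p : ℝ) :
    itg α a κ p ≤ Real.exp (-2 * a * |p|) / ((2 * c - α) * c) := by
  have hc0 : 0 < c := lt_of_le_of_lt (by positivity) hc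
  have hκ : α / 2 < κ := lt_of_lt_of_le hc hcκ
  have hκ0 : 0 < κ := lt_of_le_of_lt (by positivity) hκ
  have hFκ : κ ≤ Real.sqrt (p ^ 2 + κ ^ 2) := le_sqrt_self_sq κ p hκ0.le
  have hFp : |p| ≤ Real.sqrt (p ^ 2 + κ ^ 2) := abs_le_sqrt_sq κ p
  have hdc : 0 < (2 * c - α) * c := by nlinarith
  refine div_le_div₀ (Real.exp_pos _).le
    (Real.exp_le_exp.mpr (by nlinarith)) hdc (by nlinarith)

lemma integrable_exp_neg_abs (b : ℝ) (hb : 0 < b) :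
    Integrable (fun p : ℝ => Real.exp (-b * |p|)) := by
  have hIoi : IntegrableOn (fun p : ℝ => Real.exp (-b * |p|)) (Ioi 0) := by
    refine (exp_neg_integrableOn_Ioi 0 hb).congr_fun (fun x hx => ?_) measurableSet_Ioi
    rw [abs_of_pos hx]
  have hIic : IntegrableOn (fun p : ℝ => Real.exp (-b * |p|)) (Iic 0) := by
    rw [← Measure.map_neg_eq_self (volume : Measure ℝ)]
    have m : MeasurableEmbedding fun x : ℝ => -x :=
      (Homeomorph.neg ℝ).measurableEmbedding
    rw [m.integrableOn_map_iff]
    simp_rw [Function.comp_def, abs_neg, neg_preimage, neg_Iic, neg_zero]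
    exact (integrableOn_Ici_iff_integrableOn_Ioi).mpr hIoi
  have := hIic.union hIoi
  rwa [Iic_union_Ioi, integrableOn_univ] at this

lemma itg_continuous {α a κ : ℝ} (hα : 0 < α) (hκ : α / 2 < κ) :
    Continuous (itg α a κ) := by
  apply Continuous.div
  · fun_prop
  · fun_prop
  · exact fun p => (denom_pos hα hκ p).ne'

lemma itg_integrable {α a κ : ℝ} (hα : 0 < α) (ha : 0 < a) (hκ : α / 2 < κ) :
    Integrable (itg α a κ) := by
  have hκ0 : 0 < κ := lt_of_le_of_lt (by positivity) hκ
  have hd : 0 < (2 * κ - α) * κ := by nlinarith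
  refine ((integrable_exp_neg_abs (2 * a) (by positivity)).div_const
    ((2 * κ - α) * κ)).mono (itg_continuous hα hκ).aestronglyMeasurable ?_
  refine Eventually.of_forall fun p => ?_
  rw [Real.norm_eq_abs, Real.norm_eq_abs, abs_of_nonneg (itg_nonneg hα hκ p),
    abs_of_nonneg (by positivity)]
  have := itg_le hα ha hκ le_rfl p
  simpa [neg_mul, mul_comm] using this

lemma phiA_antitone {α a : ℝ} (hα : 0 < α) (ha : 0 < a) :
    AntitoneOn (phiA α a) (Ioi (α / 2)) := by
  intro κ₁ h1 κ₂ _ h12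
  rw [phiA_eq, phiA_eq]
  have hπ : 0 < π := Real.pi_pos
  apply mul_le_mul_of_nonneg_left _ (by positivity)
  exact integral_mono (itg_integrable hα ha (lt_of_lt_of_le h1 h12))
    (itg_integrable hα ha h1) (itg_anti hα ha h1 h12)

lemma phiA_continuousAt {α a κ₀ : ℝ} (hα : 0 < α) (ha : 0 < a) (hκ₀ : α / 2 < κ₀) :
    ContinuousAt (phiA α a) κ₀ := by
  set c : ℝ := (α / 2 + κ₀) / 2 with hc
  have hc1 : α / 2 < c := by simp only [hc]; linarith
  have hc2 : c < κ₀ := by simp only [hc]; linarith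
  have hmem : Ioi c ∈ 𝓝 κ₀ := Ioi_mem_nhds hc2
  have hbint : Integrable (fun p : ℝ => Real.exp (-2 * a * |p|) / ((2 * c - α) * c)) := by
    have := (integrable_exp_neg_abs (2 * a) (by positivity)).div_const ((2 * c - α) * c)
    simpa [neg_mul] using this
  have key : ContinuousAt (fun κ => ∫ p : ℝ, itg α a κ p) κ₀ := by
    refine continuousAt_of_dominated ?_ ?_ hbint ?_
    · filter_upwards [hmem] with κ hκ
      exact (itg_continuous hα (lt_trans hc1 hκ)).aestronglyMeasurable
    · filter_upwards [hmem] with κ hκ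
      refine Eventually.of_forall fun p => ?_
      rw [Real.norm_eq_abs, abs_of_nonneg (itg_nonneg hα (lt_trans hc1 hκ) p)]
      exact itg_le hα ha hc1 (le_of_lt hκ) p
    · refine Eventually.of_forall fun p => ?_
      have hd : (2 * Real.sqrt (p ^ 2 + κ₀ ^ 2) - α) * Real.sqrt (p ^ 2 + κ₀ ^ 2) ≠ 0 :=
        (denom_pos hα hκ₀ p).ne'
      apply ContinuousAt.div
      · fun_prop
      · fun_prop
      · exact hd
  have heq : phiA α a = fun κ => (α / (4 * π)) * ∫ p : ℝ, itg α a κ p := rfl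
  rw [heq]
  exact key.const_mul _

lemma sBeta_continuousAt {β κ₀ : ℝ} (hκ₀ : 0 < κ₀) : ContinuousAt (sBeta β) κ₀ := by
  unfold sBeta
  have h1 : ContinuousAt (fun κ : ℝ => Real.log (κ / 2)) κ₀ :=
    (Real.continuousAt_log (by positivity)).comp ((continuous_id.div_const 2).continuousAt)
  exact continuousAt_const.add ((h1.add continuousAt_const).const_mul _)

lemma sBeta_lt {β κ₁ κ₂ : ℝ} (h1 : 0 < κ₁) (h12 : κ₁ < κ₂) : sBeta β κ₁ < sBeta β κ₂ := by
  unfold sBeta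
  have hπ : 0 < π := Real.pi_pos
  have : Real.log (κ₁ / 2) < Real.log (κ₂ / 2) := Real.log_lt_log (by positivity) (by linarith)
  have h2π : (0:ℝ) < 1 / (2 * π) := by positivity
  nlinarith

/-- The constant in the lower bound for `phiA` near the threshold. -/
noncomputable def lbC (α a : ℝ) : ℝ :=
  (α / (2 * π)) * (Real.exp (-2 * a * Real.sqrt (1 + (α / 2 + 1) ^ 2)) /
    (Real.sqrt (1 + (α / 2 + 1) ^ 2) * (2 / α + 1)))

lemma lbC_pos {α a : ℝ} (hα : 0 < α) : 0 < lbC α a := by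
  have hM : 0 < Real.sqrt (1 + (α / 2 + 1) ^ 2) := Real.sqrt_pos.mpr (by positivity)
  have hπ : 0 < π := Real.pi_pos
  unfold lbC
  positivity

lemma phiA_lower {α a κ : ℝ} (hα : 0 < α) (ha : 0 < a) (h1 : α / 2 < κ)
    (h2 : κ < α / 2 + 1 / 2) :
    lbC α a / Real.sqrt (2 * κ - α) ≤ phiA α a κ := by
  have hπ : 0 < π := Real.pi_pos
  have hκ0 : 0 < κ := lt_of_le_of_lt (by positivity) h1
  set ε : ℝ := 2 * κ - α with hε
  have hε0 : 0 < ε := by simp only [hε]; linarith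
  have hε1 : ε < 1 := by simp only [hε]; linarith
  set M : ℝ := Real.sqrt (1 + (α / 2 + 1) ^ 2) with hM
  have hM1 : 1 ≤ M := by
    rw [hM]
    exact (Real.le_sqrt zero_le_one (by positivity)).mpr (by nlinarith [sq_nonneg (α / 2 + 1)])
  have hM0 : 0 < M := lt_of_lt_of_le one_pos hM1
  set c : ℝ := Real.exp (-2 * a * M) / (M * (2 / α + 1)) with hcdef
  have hcpos : 0 < c := by positivity
  set s : Set ℝ := Icc (-Real.sqrt ε) (Real.sqrt ε) with hs
  -- pointwise lower bound on s
  have key : ∀ p ∈ s, c / ε ≤ itg α a κ p := by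
    intro p hp
    have hp2 : p ^ 2 ≤ ε := by
      have : |p| ≤ Real.sqrt ε := abs_le.mpr ⟨hp.1, hp.2⟩
      have h2 : |p| ^ 2 ≤ Real.sqrt ε ^ 2 := by
        apply pow_le_pow_left₀ (abs_nonneg p) this
      rwa [sq_abs, Real.sq_sqrt hε0.le] at h2
    set F : ℝ := Real.sqrt (p ^ 2 + κ ^ 2) with hF
    have hFκ : κ ≤ F := le_sqrt_self_sq κ p hκ0.le
    have hFM : F ≤ M := by
      rw [hF, hM]
      apply Real.sqrt_le_sqrt
      nlinarith
    have hFsq : F ^ 2 = p ^ 2 + κ ^ 2 := Real.sq_sqrt (by positivity)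
    have hF0 : 0 < F := lt_of_lt_of_le hκ0 hFκ
    have hαF : α * (F - κ) ≤ p ^ 2 := by nlinarith
    have hfrac : F - κ ≤ ε / α := by
      rw [le_div_iff₀ hα]
      nlinarith
    have hdenlt : (2 * F - α) * F ≤ M * (2 / α + 1) * ε := by
      have h2F : 2 * F - α ≤ (2 / α + 1) * ε := by
        have : 2 * F - α = 2 * (F - κ) + ε := by simp only [hε]; ring
        rw [this]
        have : F - κ ≤ ε / α := hfrac
        have heq : (2 / α + 1) * ε = 2 * (ε / α) + ε := by field_simp
        rw [heq]; linarith
      have h2F0 : 0 ≤ 2 * F - α := by nlinarith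
      calc (2 * F - α) * F ≤ ((2 / α + 1) * ε) * M := by
            apply mul_le_mul h2F hFM hF0.le (by positivity)
        _ = M * (2 / α + 1) * ε := by ring
    have hdpos : 0 < (2 * F - α) * F := denom_pos hα h1 p
    have : c / ε = Real.exp (-2 * a * M) / (M * (2 / α + 1) * ε) := by
      rw [hcdef, div_div]
    rw [this]
    exact div_le_div₀ (Real.exp_pos _).le (Real.exp_le_exp.mpr (by nlinarith)) hdpos hdenlt
  -- integral bounds
  have hInt : Integrable (itg α a κ) := itg_integrable hα ha h1
  have hsm : volume s < ⊤ := by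
    rw [hs, Real.volume_Icc]; exact ENNReal.ofReal_lt_top
  have step1 : ∫ p in s, (c / ε) ≤ ∫ p in s, itg α a κ p := by
    apply setIntegral_mono_on (integrableOn_const hsm.ne) hInt.integrableOn
      measurableSet_Icc key
  have step2 : ∫ p in s, itg α a κ p ≤ ∫ p : ℝ, itg α a κ p :=
    setIntegral_le_integral hInt (Eventually.of_forall (itg_nonneg hα h1))
  have hvol : (volume s).toReal = 2 * Real.sqrt ε := by
    rw [hs, Real.volume_Icc, show Real.sqrt ε - -Real.sqrt ε = 2 * Real.sqrt ε by ring,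
      ENNReal.toReal_ofReal (by positivity)]
  have step0 : (2 * Real.sqrt ε) * (c / ε) = 2 * c / Real.sqrt ε := by
    have hsε : Real.sqrt ε * Real.sqrt ε = ε := Real.mul_self_sqrt hε0.le
    have hsε0 : 0 < Real.sqrt ε := Real.sqrt_pos.mpr hε0
    have h1 : Real.sqrt ε / ε = 1 / Real.sqrt ε := by
      rw [div_eq_div_iff hε0.ne' hsε0.ne', one_mul]; exact hsε
    calc (2 * Real.sqrt ε) * (c / ε) = 2 * c * (Real.sqrt ε / ε) := by ring
      _ = 2 * c * (1 / Real.sqrt ε) := by rw [h1]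
      _ = 2 * c / Real.sqrt ε := by ring
  have hlb : 2 * c / Real.sqrt ε ≤ ∫ p : ℝ, itg α a κ p := by
    have := step1.trans step2
    rwa [setIntegral_const, smul_eq_mul, measureReal_def, hvol, step0] at this
  -- conclude
  rw [phiA_eq]
  have hconst : lbC α a / Real.sqrt ε = (α / (4 * π)) * (2 * c / Real.sqrt ε) := by
    unfold lbC
    rw [← hM, ← hcdef]
    have hsε0 : 0 < Real.sqrt ε := Real.sqrt_pos.mpr hε0
    field_simp
    ring
  rw [hε] at hconst ⊢
  rw [hconst]
  exact mul_le_mul_of_nonneg_left hlb (by positivity)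

theorem stmt5 (α β a : ℝ) (hα : 0 < α) (ha : 0 < a) :
    ∃! κ : ℝ, κ ∈ Set.Ioi (α / 2) ∧ sBeta β κ - phiA α a κ = 0 := by
  have hπ : 0 < π := Real.pi_pos
  set F : ℝ → ℝ := fun κ => sBeta β κ - phiA α a κ with hFdef
  -- strict monotonicity of F on Ioi (α/2)
  have hmono : StrictMonoOn F (Ioi (α / 2)) := by
    intro x hx y hy hxy
    have hx0 : 0 < x := lt_of_le_of_lt (by positivity) hx
    have h1 : sBeta β x < sBeta β y := sBeta_lt hx0 hxy
    have h2 : phiA α a y ≤ phiA α a x := phiA_antitone hα ha hx hy hxy.le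
    simp only [hFdef]
    linarith
  -- a point where F < 0
  set D : ℝ := lbC α a with hD
  have hDpos : 0 < D := lbC_pos hα
  set B : ℝ := sBeta β (α / 2 + 1 / 2) with hB
  set ε : ℝ := min (1 / 2) ((D / (|B| + 1)) ^ 2 / 2) with hε
  have hε0 : 0 < ε := by
    apply lt_min (by norm_num)
    positivity
  have hεhalf : ε ≤ 1 / 2 := min_le_left _ _
  have hX : 0 < (D / (|B| + 1)) ^ 2 := by positivity
  have hεsq : ε < (D / (|B| + 1)) ^ 2 := by
    calc ε ≤ (D / (|B| + 1)) ^ 2 / 2 := min_le_right _ _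
      _ < (D / (|B| + 1)) ^ 2 := by linarith
  have hsq0 : 0 < Real.sqrt ε := Real.sqrt_pos.mpr hε0
  have hsqlt : Real.sqrt ε < D / (|B| + 1) := by
    have h := Real.sqrt_lt_sqrt hε0.le hεsq
    rwa [Real.sqrt_sq (by positivity)] at h
  set κ₁ : ℝ := (α + ε) / 2 with hκ₁
  have hκ₁mem : α / 2 < κ₁ := by simp only [hκ₁]; linarith
  have hκ₁pos : 0 < κ₁ := lt_of_le_of_lt (by positivity) hκ₁mem
  have hκ₁lt : κ₁ < α / 2 + 1 / 2 := by simp only [hκ₁]; linarith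
  have hεeq : 2 * κ₁ - α = ε := by simp only [hκ₁]; ring
  -- F κ₁ < 0
  have hphi_lb : D / Real.sqrt ε ≤ phiA α a κ₁ := by
    have h := phiA_lower hα ha hκ₁mem hκ₁lt
    rwa [hεeq] at h
  have hsBle : sBeta β κ₁ ≤ B := (sBeta_lt hκ₁pos hκ₁lt).le
  have hDgt : B < D / Real.sqrt ε := by
    have h1 : |B| + 1 < D / Real.sqrt ε := by
      rw [lt_div_iff₀ hsq0]
      calc (|B| + 1) * Real.sqrt ε < (|B| + 1) * (D / (|B| + 1)) :=
            mul_lt_mul_of_pos_left hsqlt (by positivity)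
        _ = D := by field_simp
    have h2 : B ≤ |B| := le_abs_self B
    linarith
  have hFκ₁ : F κ₁ < 0 := by
    simp only [hFdef]; linarith
  -- the point κ₂ where F > 0
  set κ₂ : ℝ := max κ₁
    (2 * Real.exp (2 * π * (phiA α a κ₁ - β + 1) - Real.eulerMascheroniConstant)) with hκ₂
  have hκ₁₂ : κ₁ ≤ κ₂ := le_max_left _ _
  have hκ₂mem : α / 2 < κ₂ := lt_of_lt_of_le hκ₁mem hκ₁₂
  have hκ₂pos : 0 < κ₂ := lt_of_lt_of_le hκ₁pos hκ₁₂
  have hlog : 2 * π * (phiA α a κ₁ - β + 1) - Real.eulerMascheroniConstant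
      ≤ Real.log (κ₂ / 2) := by
    rw [Real.le_log_iff_exp_le (by positivity : (0:ℝ) < κ₂ / 2)]
    have h := le_max_right κ₁
      (2 * Real.exp (2 * π * (phiA α a κ₁ - β + 1) - Real.eulerMascheroniConstant))
    rw [← hκ₂] at h
    linarith
  have hsB2 : phiA α a κ₁ + 1 ≤ sBeta β κ₂ := by
    have hkey : 2 * π * (phiA α a κ₁ - β + 1)
        ≤ Real.log (κ₂ / 2) + Real.eulerMascheroniConstant := by linarith
    have h2 := mul_le_mul_of_nonneg_left hkey
      (le_of_lt (by positivity : (0:ℝ) < 1 / (2 * π)))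
    have hid : (1 / (2 * π)) * (2 * π * (phiA α a κ₁ - β + 1))
        = phiA α a κ₁ - β + 1 := by field_simp
    rw [hid] at h2
    unfold sBeta
    linarith
  have hFκ₂ : 0 < F κ₂ := by
    have hphi2 : phiA α a κ₂ ≤ phiA α a κ₁ := phiA_antitone hα ha hκ₁mem hκ₂mem hκ₁₂
    simp only [hFdef]; linarith
  -- IVT
  have hIccsub : Icc κ₁ κ₂ ⊆ Ioi (α / 2) := fun x hx => lt_of_lt_of_le hκ₁mem hx.1
  have hcont : ContinuousOn F (Icc κ₁ κ₂) := by
    intro x hx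
    have h := hIccsub hx
    exact ((sBeta_continuousAt (lt_of_le_of_lt (by positivity) h)).sub
      (phiA_continuousAt hα ha h)).continuousWithinAt
  obtain ⟨κ, hκmem, hκeq⟩ := intermediate_value_Icc hκ₁₂ hcont ⟨hFκ₁.le, hFκ₂.le⟩
  refine ⟨κ, ⟨hIccsub hκmem, hκeq⟩, ?_⟩
  rintro y ⟨hy, hy0⟩
  exact hmono.injOn hy (hIccsub hκmem) (by show F y = F κ; rw [hκeq]; exact hy0)
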